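/- For s ∈ ℂ with 0 < Re(s) < 1, the Fourier transform of x ↦ |x|^{s-1} is ξ ↦ γ(s)·|ξ|^{-s} in the sense of tempered distributions, where γ(s) = π^{-s/2}Γ(s/2) / (π^{-(1-s)/2}Γ((1-s)/2)). -/

import Mathlib

open MeasureTheory Set Complex Real FourierTransform

lemma mult_formula {f g : ℝ → ℂ} (hf : Integrable f) (hg : Integrable g) :
    ∫ ξ : ℝ, 𝓕 f ξ * g ξ = ∫ x : ℝ, f x * 𝓕 g x := by
  have hflip : (innerₗ ℝ).flip = innerₗ ℝ :=
    LinearMap.ext fun x => LinearMap.ext fun y => real_inner_comm x y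
  have h := VectorFourier.integral_fourierIntegral_smul_eq_flip (e := Real.fourierChar)
    (L := innerₗ ℝ) (μ := volume) (ν := volume) Real.continuous_fourierChar
    continuous_inner hf hg
  rw [hflip] at h
  simp only [smul_eq_mul] at h; exact h

lemma I1 {c : ℂ} (hc : 0 < c.re) {r : ℝ} (hr : 0 < r) :
    IntegrableOn (fun t : ℝ => (t : ℂ) ^ (c - 1) * Complex.exp (-(r * t : ℂ))) (Ioi 0) := by
  have h0 : MellinConvergent (fun u : ℝ => Complex.exp (-u : ℝ)) c := by
    refine (Complex.GammaIntegral_convergent hc).congr_fun (fun x hx => ?_) measurableSet_Ioi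
    simp [smul_eq_mul, mul_comm, Complex.ofReal_exp]
  have h1 : MellinConvergent (fun t : ℝ => Complex.exp (-(r * t) : ℝ)) c := by
    have := (MellinConvergent.comp_mul_left (f := fun u : ℝ => Complex.exp (-u : ℝ))
      (s := c) (a := r) hr).2 h0
    simpa using this
  refine h1.congr_fun (fun t ht => ?_) measurableSet_Ioi
  simp only [smul_eq_mul]
  norm_cast

lemma I2 {c : ℂ} (hc : 0 < c.re) {r : ℝ} (hr : 0 < r) :
    IntegrableOn (fun t : ℝ => (t : ℂ) ^ (-c - 1) * Complex.exp (-(r / t : ℂ))) (Ioi 0) := by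
  have h1 : MellinConvergent (fun t : ℝ => Complex.exp (-(r * t) : ℝ)) c := by
    have h0 : MellinConvergent (fun u : ℝ => Complex.exp (-u : ℝ)) c := by
      refine (Complex.GammaIntegral_convergent hc).congr_fun (fun x hx => ?_) measurableSet_Ioi
      simp [smul_eq_mul, mul_comm, Complex.ofReal_exp]
    have := (MellinConvergent.comp_mul_left (f := fun u : ℝ => Complex.exp (-u : ℝ))
      (s := c) (a := r) hr).2 h0
    simpa using this
  have h2 : MellinConvergent (fun t : ℝ => Complex.exp (-(r * t ^ (-1 : ℝ)) : ℝ)) (-c) := by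
    refine (MellinConvergent.comp_rpow (f := fun t : ℝ => Complex.exp (-(r * t) : ℝ))
      (s := -c) (a := (-1 : ℝ)) (by norm_num)).2 ?_
    convert h1 using 2
    norm_num
  refine h2.congr_fun (fun t ht => ?_) measurableSet_Ioi
  simp only [smul_eq_mul]
  rw [Real.rpow_neg_one]
  push_cast
  rw [div_eq_mul_inv]

lemma V2 {c : ℂ} (hc : 0 < c.re) {r : ℝ} (hr : 0 < r) :
    ∫ t : ℝ in Ioi 0, (t : ℂ) ^ (-c - 1) * Complex.exp (-(r / t : ℂ))
      = (1 / r : ℂ) ^ c * Complex.Gamma c := by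
  have key : mellin (fun t : ℝ => Complex.exp (-(r * t⁻¹) : ℝ)) (-c)
      = mellin (fun t : ℝ => Complex.exp (-(r * t) : ℝ)) c := by
    simpa using mellin_comp_inv (fun t : ℝ => Complex.exp (-(r * t) : ℝ)) (-c)
  have lhs_eq : ∫ t : ℝ in Ioi 0, (t : ℂ) ^ (-c - 1) * Complex.exp (-(r / t : ℂ))
      = mellin (fun t : ℝ => Complex.exp (-(r * t⁻¹) : ℝ)) (-c) := by
    refine setIntegral_congr_fun measurableSet_Ioi (fun t ht => ?_)
    simp only [smul_eq_mul]
    push_cast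
    rw [div_eq_mul_inv]
  have rhs_eq : mellin (fun t : ℝ => Complex.exp (-(r * t) : ℝ)) c
      = (1 / r : ℂ) ^ c * Complex.Gamma c := by
    rw [← integral_cpow_mul_exp_neg_mul_Ioi hc hr]
    refine setIntegral_congr_fun measurableSet_Ioi (fun t ht => ?_)
    simp only [smul_eq_mul]
    norm_cast
  rw [lhs_eq, key, rhs_eq]

lemma R2 {b : ℝ} (hb : 0 < b) {r : ℝ} (hr : 0 < r) :
    ∫ t : ℝ in Ioi 0, t ^ (-b - 1) * Real.exp (-(r / t))
      = (1 / r) ^ b * Real.Gamma b := by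
  have h := V2 (c := (b : ℂ)) (by simpa using hb) hr
  rw [← Complex.ofReal_inj]
  have lhs_eq : (↑(∫ t : ℝ in Ioi 0, t ^ (-b - 1) * rexp (-(r / t))) : ℂ)
      = ∫ t : ℝ in Ioi 0, (t : ℂ) ^ (-(b:ℂ) - 1) * Complex.exp (-(r / t : ℂ)) := by
    refine integral_ofReal.symm.trans <| setIntegral_congr_fun measurableSet_Ioi fun t ht => ?_
    have h1 : (RCLike.ofReal (t ^ (-b - 1) * rexp (-(r / t))) : ℂ)
        = Complex.ofReal (t ^ (-b - 1) * rexp (-(r / t))) := rfl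
    rw [h1, Complex.ofReal_mul, Complex.ofReal_cpow (le_of_lt ht), Complex.ofReal_exp]
    push_cast
    ring_nf
  rw [lhs_eq, h, Complex.ofReal_mul, Complex.ofReal_cpow (by positivity : (0:ℝ) ≤ 1/r),
    Complex.Gamma_ofReal]
  push_cast
  ring

lemma integrableOn_abs_rpow {b : ℝ} (hb : -1 < b) :
    IntegrableOn (fun x : ℝ => |x| ^ b) (Ioc (-1) 1) := by
  have h1 : IntegrableOn (fun x : ℝ => x ^ b) (Icc 0 1) := by
    have := (intervalIntegral.intervalIntegrable_rpow' (a := 0) (b := 1) hb).1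
    have hz : IntegrableOn (fun x : ℝ => x ^ b) ({0} : Set ℝ) := by
      unfold IntegrableOn
      rw [Measure.restrict_eq_zero.2 (by simp)]
      exact integrable_zero_measure
    refine IntegrableOn.mono_set (t := Ioc 0 1 ∪ {0}) (this.union hz) ?_
    intro x hx
    rcases eq_or_lt_of_le hx.1 with h | h
    · exact Or.inr (by simp [← h])
    · exact Or.inl ⟨h, hx.2⟩
  have h2 : IntegrableOn (fun x : ℝ => |x| ^ b) (Ioc 0 1) := by
    refine ((h1.mono_set Ioc_subset_Icc_self).congr_fun (fun x hx => ?_) measurableSet_Ioc)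
    rw [abs_of_pos hx.1]
  have h3 : IntegrableOn (fun x : ℝ => |x| ^ b) (Ioc (-1) 0) := by
    have hInd : Integrable (Set.indicator (Icc 0 1) (fun x : ℝ => x ^ b)) := by
      rwa [integrable_indicator_iff measurableSet_Icc]
    have hNeg : Integrable (fun x : ℝ => Set.indicator (Icc 0 1) (fun y : ℝ => y ^ b) (-x)) :=
      hInd.comp_neg
    refine (hNeg.integrableOn).congr_fun (fun x hx => ?_) measurableSet_Ioc
    have hx1 : -x ∈ Icc (0:ℝ) 1 := ⟨by linarith [hx.2], by linarith [hx.1]⟩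
    beta_reduce
    rw [Set.indicator_of_mem hx1, abs_of_nonpos hx.2]
  have := h3.union h2
  rwa [Set.Ioc_union_Ioc_eq_Ioc (by norm_num) (by norm_num)] at this

lemma integrable_abs_rpow_mul_schwartz {b : ℝ} (hb1 : -1 < b) (hb2 : b < 0)
    (f : SchwartzMap ℝ ℂ) : Integrable (fun x : ℝ => |x| ^ b * ‖f x‖) := by
  have hmeas : AEStronglyMeasurable (fun x : ℝ => |x| ^ b * ‖f x‖) volume := by
    refine ((measurable_abs.pow_const b).mul f.continuous.norm.measurable).aestronglyMeasurable
  obtain ⟨C, hC⟩ : ∃ C, ∀ x, ‖f x‖ ≤ C := ⟨(SchwartzMap.seminorm ℝ 0 0) f,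
    fun x => by simpa using SchwartzMap.norm_le_seminorm ℝ f x⟩
  have hC0 : 0 ≤ C := le_trans (norm_nonneg _) (hC 0)
  rw [← integrableOn_univ, ← Set.union_compl_self (Ioc (-1:ℝ) 1)]
  refine IntegrableOn.union ?_ ?_
  · refine Integrable.mono' (((integrableOn_abs_rpow hb1).const_mul C)) hmeas.restrict ?_
    filter_upwards with x
    calc ‖|x| ^ b * ‖f x‖‖ = |x| ^ b * ‖f x‖ := by
          rw [norm_mul, Real.norm_of_nonneg (Real.rpow_nonneg (abs_nonneg x) b), norm_norm]
      _ ≤ |x| ^ b * C := mul_le_mul_of_nonneg_left (hC x) (Real.rpow_nonneg (abs_nonneg x) b)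
      _ = C * |x| ^ b := mul_comm _ _
  · refine Integrable.mono' (f.integrable.norm.integrableOn) hmeas.restrict ?_
    refine (ae_restrict_iff' (measurableSet_Ioc.compl)).2 ?_
    filter_upwards with x hx
    have h1 : 1 ≤ |x| := by
      rcases not_and_or.1 hx with h | h
      · push_neg at h; rw [abs_of_nonpos (by linarith)]; linarith
      · push_neg at h; rw [abs_of_pos (by linarith)]; linarith
    have : |x| ^ b ≤ 1 := Real.rpow_le_one_of_one_le_of_nonpos h1 (le_of_lt hb2)
    calc ‖|x| ^ b * ‖f x‖‖ = |x| ^ b * ‖f x‖ := by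
          rw [norm_mul, Real.norm_of_nonneg (Real.rpow_nonneg (abs_nonneg x) b),
            norm_norm]
      _ ≤ 1 * ‖f x‖ := by
          exact mul_le_mul_of_nonneg_right this (norm_nonneg _)
      _ = ‖f x‖ := one_mul _

lemma cpow_aux (w : ℂ) {u p : ℝ} (hu : 0 < u) (hp : 0 < p) :
    (1 / ((p * (u * u) : ℝ) : ℂ)) ^ w = ((p : ℝ) : ℂ) ^ (-w) * ((u : ℝ) : ℂ) ^ (-(w + w)) := by
  have hpu : (0:ℝ) < p * (u * u) := by positivity
  have harg : ((p * (u * u) : ℝ) : ℂ).arg ≠ π := by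
    rw [Complex.arg_ofReal_of_nonneg hpu.le]
    exact Ne.symm Real.pi_ne_zero
  rw [one_div, Complex.inv_cpow _ _ harg, ← Complex.cpow_neg]
  have h1 : ((p * (u * u) : ℝ) : ℂ) = (p : ℂ) * ((u * u : ℝ) : ℂ) := by push_cast; ring
  rw [h1, Complex.mul_cpow_ofReal_nonneg hp.le (by positivity) (-w)]
  have h2 : ((u * u : ℝ) : ℂ) = (u : ℂ) * (u : ℂ) := by push_cast; ring
  rw [h2, Complex.mul_cpow_ofReal_nonneg hu.le hu.le (-w),
    ← Complex.cpow_add _ _ (Complex.ofReal_ne_zero.2 hu.ne'), neg_add]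

lemma rpow_aux (w : ℝ) {u p : ℝ} (hu : 0 < u) (hp : 0 < p) :
    (1 / (p * (u * u))) ^ w = p ^ (-w) * u ^ (-(w + w)) := by
  rw [one_div, Real.inv_rpow (by positivity) w, ← Real.rpow_neg (by positivity),
    Real.mul_rpow hp.le (by positivity), Real.mul_rpow hu.le hu.le,
    ← Real.rpow_add hu, neg_add]

theorem stmt2 (s : ℂ) (hs0 : 0 < s.re) (hs1 : s.re < 1) (φ : SchwartzMap ℝ ℂ) :
    ∫ x : ℝ, ((|x| : ℝ) : ℂ) ^ (s - 1) * (𝓕 (φ : ℝ → ℂ)) x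
      = ((π : ℂ) ^ (-s / 2) * Complex.Gamma (s / 2) * (π : ℂ) ^ ((1 - s) / 2)
          / Complex.Gamma ((1 - s) / 2))
        * ∫ ξ : ℝ, ((|ξ| : ℝ) : ℂ) ^ (-s) * φ ξ := by
  have ha : 0 < ((1 - s) / 2).re := by
    simp [Complex.div_re, Complex.normSq]
    linarith
  have hs2 : 0 < (s / 2).re := by
    simp [Complex.div_re, Complex.normSq]
    linarith
  have har : (0:ℝ) < (1 - s.re) / 2 := by linarith
  have hsr2 : (0:ℝ) < s.re / 2 := by linarith
  have hre1 : ((1 - s) / 2 - 1).re = (1 - s.re) / 2 - 1 := by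
    simp [Complex.div_re, Complex.normSq]
  have hre2 : (-(s / 2) - 1).re = -(s.re / 2) - 1 := by
    simp [Complex.div_re, Complex.normSq]
  have hae : ∀ᵐ (x : ℝ), x ≠ 0 := by
    refine ae_iff.2 ?_
    simpa using measure_singleton (0:ℝ)
  set Gs : SchwartzMap ℝ ℂ := (SchwartzMap.fourierTransformCLM ℂ) φ with hGs_def
  have hG : ⇑Gs = 𝓕 ⇑φ := by rw [hGs_def, SchwartzMap.fourierTransformCLM_apply]; rfl
  rw [show (fun x : ℝ => ((|x| : ℝ) : ℂ) ^ (s - 1) * (𝓕 (φ : ℝ → ℂ) : ℝ → ℂ) x)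
      = fun x : ℝ => ((|x| : ℝ) : ℂ) ^ (s - 1) * Gs x from by rw [hG]]
  set c₁ : ℂ := (π : ℂ) ^ ((1 - s) / 2) / Complex.Gamma ((1 - s) / 2) with hc₁_def
  set F : ℝ → ℝ → ℂ := fun x t =>
    (t : ℂ) ^ ((1 - s) / 2 - 1) * Complex.exp (-((π * x ^ 2 : ℝ) * t : ℂ)) * Gs x with hF_def
  set H : ℝ → ℝ → ℂ := fun t ξ =>
    (t : ℂ) ^ (-(s / 2) - 1) * Complex.exp (-((π * ξ ^ 2 : ℝ) / t : ℂ)) * φ ξ with hH_def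
  -- Step A : pointwise representation
  have hπx : ∀ x : ℝ, x ≠ 0 → (0:ℝ) < π * x ^ 2 := fun x hx => by positivity
  have hπa : ((π : ℝ) : ℂ) ^ ((1 - s) / 2) ≠ 0 := by
    simp [Complex.cpow_eq_zero_iff, Complex.ofReal_eq_zero, Real.pi_ne_zero]
  have hΓa : Complex.Gamma ((1 - s) / 2) ≠ 0 := Complex.Gamma_ne_zero_of_re_pos ha
  have stepA : ∀ x : ℝ, x ≠ 0 →
      ((|x| : ℝ) : ℂ) ^ (s - 1) * Gs x = c₁ * ∫ t in Ioi 0, F x t := by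
    intro x hx
    have h1 : (∫ t in Ioi 0, F x t)
        = (∫ t : ℝ in Ioi 0, (t : ℂ) ^ ((1 - s) / 2 - 1)
            * Complex.exp (-((π * x ^ 2 : ℝ) * t : ℂ))) * Gs x :=
      integral_mul_const (Gs x) _
    rw [h1, integral_cpow_mul_exp_neg_mul_Ioi ha (hπx x hx)]
    have hxx : (π * x ^ 2 : ℝ) = π * (|x| * |x|) := by
      rw [abs_mul_abs_self]; ring
    rw [hxx, cpow_aux ((1 - s) / 2) (abs_pos.2 hx) Real.pi_pos]
    have hexp : -((1 - s) / 2 + (1 - s) / 2) = s - 1 := by ring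
    rw [hexp, hc₁_def]
    have hππ : ((π:ℝ):ℂ) ^ ((1 - s) / 2) * ((π:ℝ):ℂ) ^ (-((1 - s) / 2)) = 1 := by
      rw [← Complex.cpow_add _ _ (Complex.ofReal_ne_zero.2 Real.pi_ne_zero), add_neg_cancel,
        Complex.cpow_zero]
    rw [div_mul_eq_mul_div, eq_div_iff hΓa]
    linear_combination (-(((|x|:ℝ):ℂ) ^ (s - 1) * Complex.Gamma ((1 - s) / 2) * Gs x)) * hππ
  -- Step C : the inner integral in x, for fixed t > 0
  have stepC : ∀ t ∈ Ioi (0:ℝ), (∫ x : ℝ, F x t) = ∫ ξ : ℝ, H t ξ := by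
    intro t ht
    rw [mem_Ioi] at ht
    have htne : ((t : ℝ) : ℂ) ≠ 0 := Complex.ofReal_ne_zero.2 ht.ne'
    have hbre : (0:ℝ) < ((t : ℝ) : ℂ).re := by simpa using ht
    have hgauss_int : Integrable (fun x : ℝ => Complex.exp (-(π:ℂ) * (t:ℂ) * (x:ℂ) ^ 2)) := by
      have h0 : (0:ℝ) < ((π:ℂ) * (t:ℂ)).re := by
        have : ((π:ℂ) * (t:ℂ)) = ((π * t : ℝ) : ℂ) := by push_cast; ring
        rw [this, Complex.ofReal_re]; positivity
      refine (integrable_cexp_neg_mul_sq h0).congr ?_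
      filter_upwards with x
      congr 1
      ring
    have h1 : (∫ x : ℝ, F x t)
        = ∫ x : ℝ, (t : ℂ) ^ ((1 - s) / 2 - 1)
            * (Complex.exp (-(π:ℂ) * (t:ℂ) * (x:ℂ) ^ 2) * Gs x) := by
      refine integral_congr_ae (Filter.Eventually.of_forall fun x => ?_)
      have hexp1 : Complex.exp (-((π * x ^ 2 : ℝ) * t : ℂ))
          = Complex.exp (-(π:ℂ) * (t:ℂ) * (x:ℂ) ^ 2) := by congr 1; push_cast; ring
      rw [hF_def]
      simp only []
      rw [hexp1, mul_assoc]
    rw [h1, integral_const_mul]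
    have h2 : (∫ x : ℝ, Complex.exp (-(π:ℂ) * (t:ℂ) * (x:ℂ) ^ 2) * Gs x)
        = ∫ ξ : ℝ, 𝓕 (fun x : ℝ => Complex.exp (-(π:ℂ) * (t:ℂ) * (x:ℂ) ^ 2)) ξ * φ ξ := by
      rw [hG]
      exact (mult_formula hgauss_int φ.integrable).symm
    rw [h2, fourier_gaussian_pi hbre, ← integral_const_mul]
    refine integral_congr_ae (Filter.Eventually.of_forall fun ξ => ?_)
    have hpow : (t : ℂ) ^ ((1 - s) / 2 - 1) * (1 / (t:ℂ) ^ (1/2 : ℂ))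
        = (t : ℂ) ^ (-(s / 2) - 1) := by
      rw [one_div, ← Complex.cpow_neg, ← Complex.cpow_add _ _ htne]
      congr 1
      ring
    have hexp2 : -(π:ℂ) / (t:ℂ) * (ξ:ℂ) ^ 2 = -((π * ξ ^ 2 : ℝ) / t : ℂ) := by
      push_cast; ring
    rw [hH_def]
    simp only []
    rw [← hpow, ← hexp2]
    ring
  -- Step E : the inner integral in t, for fixed ξ ≠ 0
  have stepE : ∀ ξ : ℝ, ξ ≠ 0 →
      (∫ t in Ioi 0, H t ξ)
        = (Complex.Gamma (s / 2) * (π:ℂ) ^ (-(s/2))) * (((|ξ| : ℝ) : ℂ) ^ (-s) * φ ξ) := by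
    intro ξ hξ
    have h1 : (∫ t in Ioi 0, H t ξ)
        = (∫ t : ℝ in Ioi 0, (t : ℂ) ^ (-(s/2) - 1)
            * Complex.exp (-((π * ξ ^ 2 : ℝ) / t : ℂ))) * φ ξ :=
      integral_mul_const (φ ξ) _
    rw [h1, V2 hs2 (hπx ξ hξ)]
    have hxx : (π * ξ ^ 2 : ℝ) = π * (|ξ| * |ξ|) := by
      rw [abs_mul_abs_self]; ring
    rw [hxx, cpow_aux (s / 2) (abs_pos.2 hξ) Real.pi_pos]
    have hexp : -(s / 2 + s / 2) = -s := by ring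
    rw [hexp]
    ring
  -- Fubini 1
  have hInt1 : Integrable (Function.uncurry F) (volume.prod (volume.restrict (Ioi 0))) := by
    have hmeas : AEStronglyMeasurable (Function.uncurry F)
        (volume.prod (volume.restrict (Ioi 0))) := by
      refine Measurable.aestronglyMeasurable ?_
      rw [hF_def]
      have : Function.uncurry (fun (x t : ℝ) =>
          (t : ℂ) ^ ((1 - s) / 2 - 1) * Complex.exp (-((π * x ^ 2 : ℝ) * t : ℂ)) * Gs x)
          = fun p : ℝ × ℝ =>
          (p.2 : ℂ) ^ ((1 - s) / 2 - 1)
            * Complex.exp (-((π * p.1 ^ 2 : ℝ) * p.2 : ℂ)) * Gs p.1 := rfl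
      rw [this]
      fun_prop
    refine (integrable_prod_iff hmeas).2 ⟨?_, ?_⟩
    · filter_upwards [hae] with x hx
      exact (I1 ha (hπx x hx)).mul_const (Gs x)
    · have key : (fun x : ℝ => ∫ t in Ioi 0, ‖Function.uncurry F (x, t)‖)
          =ᵐ[volume] fun x : ℝ =>
            (Real.Gamma ((1 - s.re) / 2) * π ^ (-((1 - s.re) / 2)))
              * (|x| ^ (s.re - 1) * ‖Gs x‖) := by
        filter_upwards [hae] with x hx
        have hnorm : ∀ t ∈ Ioi (0:ℝ), ‖Function.uncurry F (x, t)‖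
            = (t ^ ((1 - s.re) / 2 - 1) * Real.exp (-(π * x ^ 2 * t))) * ‖Gs x‖ := by
          intro t ht
          rw [mem_Ioi] at ht
          rw [hF_def]
          simp only [Function.uncurry]
          rw [norm_mul, norm_mul]
          congr 1
          congr 1
          · rw [Complex.norm_cpow_eq_rpow_re_of_pos ht, hre1]
          · rw [Complex.norm_exp]
            congr 1
            rw [show (-(((π * x ^ 2 : ℝ) : ℂ) * (t:ℂ))) = ((-(π * x ^ 2 * t) : ℝ) : ℂ) from by
              push_cast; ring]
            rw [Complex.ofReal_re]
        rw [setIntegral_congr_fun measurableSet_Ioi hnorm, integral_mul_const,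
          integral_rpow_mul_exp_neg_mul_Ioi har (hπx x hx)]
        have hxx : (π * x ^ 2 : ℝ) = π * (|x| * |x|) := by
          rw [abs_mul_abs_self]; ring
        rw [hxx, rpow_aux ((1 - s.re) / 2) (abs_pos.2 hx) Real.pi_pos]
        have hexp : -((1 - s.re) / 2 + (1 - s.re) / 2) = s.re - 1 := by ring
        rw [hexp]
        ring
      refine Integrable.congr ?_ key.symm
      exact ((integrable_abs_rpow_mul_schwartz (by linarith) (by linarith) Gs).const_mul _)
  -- Fubini 2
  have hInt2 : Integrable (Function.uncurry H) ((volume.restrict (Ioi 0)).prod volume) := by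
    have hmeas : AEStronglyMeasurable (Function.uncurry H)
        ((volume.restrict (Ioi 0)).prod volume) := by
      refine Measurable.aestronglyMeasurable ?_
      rw [hH_def]
      have : Function.uncurry (fun (t ξ : ℝ) =>
          (t : ℂ) ^ (-(s / 2) - 1) * Complex.exp (-((π * ξ ^ 2 : ℝ) / t : ℂ)) * φ ξ)
          = fun p : ℝ × ℝ =>
          (p.1 : ℂ) ^ (-(s / 2) - 1)
            * Complex.exp (-((π * p.2 ^ 2 : ℝ) / p.1 : ℂ)) * φ p.2 := rfl
      rw [this]
      fun_prop
    refine (integrable_prod_iff' hmeas).2 ⟨?_, ?_⟩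
    · filter_upwards [hae] with ξ hξ
      exact (I2 hs2 (hπx ξ hξ)).mul_const (φ ξ)
    · have key : (fun ξ : ℝ => ∫ t in Ioi 0, ‖Function.uncurry H (t, ξ)‖)
          =ᵐ[volume] fun ξ : ℝ =>
            (Real.Gamma (s.re / 2) * π ^ (-(s.re / 2)))
              * (|ξ| ^ (-s.re) * ‖φ ξ‖) := by
        filter_upwards [hae] with ξ hξ
        have hnorm : ∀ t ∈ Ioi (0:ℝ), ‖Function.uncurry H (t, ξ)‖
            = (t ^ (-(s.re / 2) - 1) * Real.exp (-(π * ξ ^ 2 / t))) * ‖φ ξ‖ := by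
          intro t ht
          rw [mem_Ioi] at ht
          rw [hH_def]
          simp only [Function.uncurry]
          rw [norm_mul, norm_mul]
          congr 1
          congr 1
          · rw [Complex.norm_cpow_eq_rpow_re_of_pos ht, hre2]
          · rw [Complex.norm_exp]
            congr 1
            rw [show (-(((π * ξ ^ 2 : ℝ) : ℂ) / (t:ℂ))) = ((-(π * ξ ^ 2 / t) : ℝ) : ℂ) from by
              push_cast; ring]
            rw [Complex.ofReal_re]
        rw [setIntegral_congr_fun measurableSet_Ioi hnorm, integral_mul_const,
          R2 hsr2 (hπx ξ hξ)]
        have hxx : (π * ξ ^ 2 : ℝ) = π * (|ξ| * |ξ|) := by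
          rw [abs_mul_abs_self]; ring
        rw [hxx, rpow_aux (s.re / 2) (abs_pos.2 hξ) Real.pi_pos]
        have hexp : -(s.re / 2 + s.re / 2) = -s.re := by ring
        rw [hexp]
        ring
      refine Integrable.congr ?_ key.symm
      exact ((integrable_abs_rpow_mul_schwartz (by linarith) (by linarith) φ).const_mul _)
  -- Main chain
  calc ∫ x : ℝ, ((|x| : ℝ) : ℂ) ^ (s - 1) * Gs x
      = ∫ x : ℝ, c₁ * ∫ t in Ioi 0, F x t := by
        refine integral_congr_ae ?_
        filter_upwards [hae] with x hx
        exact stepA x hx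
    _ = c₁ * ∫ x : ℝ, ∫ t in Ioi 0, F x t := integral_const_mul c₁ _
    _ = c₁ * ∫ t in Ioi 0, ∫ x : ℝ, F x t := by rw [integral_integral_swap hInt1]
    _ = c₁ * ∫ t in Ioi 0, ∫ ξ : ℝ, H t ξ := by
        rw [setIntegral_congr_fun measurableSet_Ioi stepC]
    _ = c₁ * ∫ ξ : ℝ, ∫ t in Ioi 0, H t ξ := by rw [integral_integral_swap hInt2]
    _ = c₁ * ∫ ξ : ℝ, (Complex.Gamma (s / 2) * (π:ℂ) ^ (-(s/2)))
          * (((|ξ| : ℝ) : ℂ) ^ (-s) * φ ξ) := by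
        congr 1
        refine integral_congr_ae ?_
        filter_upwards [hae] with ξ hξ
        exact stepE ξ hξ
    _ = ((π : ℂ) ^ (-s / 2) * Complex.Gamma (s / 2) * (π : ℂ) ^ ((1 - s) / 2)
          / Complex.Gamma ((1 - s) / 2)) * ∫ ξ : ℝ, ((|ξ| : ℝ) : ℂ) ^ (-s) * φ ξ := by
        rw [integral_const_mul, hc₁_def]
        rw [show -s / 2 = -(s/2) from by ring]
        field_simp
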